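/- (sat characterizes membership) Let Q be a query with predicate p of arity n, ũ a sequence of n terms, and v a valuation. Then p([ũ]_v) ∈ Set(Q) if and only if D ⊨_v sat(ũ, Q), where sat(ũ, Q) := ∃_{Var(Q')} (ũ = t̃' ∧ d') for any variant Q' = ⟨p(t̃') | d'⟩ of Q variable-disjoint from ũ. -/

import Mathlib

/- A semantic formalization of CLP(X) queries, clauses, derivation steps,
   filters and derivation-neutrality, following Payet & Mesnard. -/

namespace CLP

variable {V D Pr : Type}

/-- A (semantic) term: its evaluation under every valuation. -/
abbrev Trm (V D : Type) := (V → D) → D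
/-- A (semantic) constraint: its truth value under every valuation. -/
abbrev Cns (V D : Type) := (V → D) → Prop

/-- The term consisting of a single variable. -/
def varT (x : V) : Trm V D := fun v => v x

/-- An atom whose arguments are domain elements. -/
structure Atom (D Pr : Type) where
  pred : Pr
  args : List D

/-- A query ⟨p(t̃) | d⟩. -/
structure Query (V D Pr : Type) where
  pred : Pr
  args : List (Trm V D)
  constr : Cns V D

/-- The set of atoms described by a query: Set(⟨p(t̃) | d⟩) = {p([t̃]_v) | D ⊨_v d}. -/
def Query.descSet (Q : Query V D Pr) : Set (Atom D Pr) :=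
  { A | ∃ v : V → D, Q.constr v ∧ A = ⟨Q.pred, Q.args.map (fun t => t v)⟩ }

/-- Applying a renaming (a bijection on variables) to a query. -/
def Query.rename (γ : V ≃ V) (Q : Query V D Pr) : Query V D Pr :=
  ⟨Q.pred, Q.args.map (fun t v => t (v ∘ γ)), fun v => Q.constr (v ∘ γ)⟩

/-- A term only depends on (is supported by) the variables in `S`. -/
def Trm.supp (t : Trm V D) (S : Set V) : Prop :=
  ∀ v w : V → D, (∀ x ∈ S, v x = w x) → t v = t w

/-- A constraint only depends on (is supported by) the variables in `S`. -/
def Cns.supp (c : Cns V D) (S : Set V) : Prop :=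
  ∀ v w : V → D, (∀ x ∈ S, v x = w x) → (c v ↔ c w)

/-- All the variables of the query lie in `S`. -/
def Query.suppBy (Q : Query V D Pr) (S : Set V) : Prop :=
  (∀ t ∈ Q.args, Trm.supp t S) ∧ Cns.supp Q.constr S

/-- The query has finitely many variables (as every syntactic query does). -/
def Query.finSupp (Q : Query V D Pr) : Prop := ∃ S : Finset V, Q.suppBy ↑S

/-- The constraint s̃ = t̃ (componentwise equality of two sequences of terms). -/
def EqArgs (a b : List (Trm V D)) (v : V → D) : Prop :=
  a.length = b.length ∧ ∀ pr ∈ a.zip b, pr.1 v = pr.2 v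

/-- A binary clause H ← c ◇ B. -/
structure Clause (V D Pr : Type) where
  hpred : Pr
  hargs : List (Trm V D)
  constr : Cns V D
  bpred : Pr
  bargs : List (Trm V D)

/-- The query ⟨H | c⟩. -/
def Clause.headQuery (r : Clause V D Pr) : Query V D Pr := ⟨r.hpred, r.hargs, r.constr⟩
/-- The query ⟨B | c⟩. -/
def Clause.bodyQuery (r : Clause V D Pr) : Query V D Pr := ⟨r.bpred, r.bargs, r.constr⟩

/-- Applying a renaming to a clause (producing a variant of the clause). -/
def Clause.rename (γ : V ≃ V) (r : Clause V D Pr) : Clause V D Pr :=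
  ⟨r.hpred, r.hargs.map (fun t v => t (v ∘ γ)), fun v => r.constr (v ∘ γ),
   r.bpred, r.bargs.map (fun t v => t (v ∘ γ))⟩

/-- All the variables of the clause lie in `S`. -/
def Clause.suppBy (r : Clause V D Pr) (S : Set V) : Prop :=
  (∀ t ∈ r.hargs ++ r.bargs, Trm.supp t S) ∧ Cns.supp r.constr S

/-- The clause has finitely many variables. -/
def Clause.finSupp (r : Clause V D Pr) : Prop := ∃ S : Finset V, r.suppBy ↑S

/-- The constraint s̃ = ũ ∧ c ∧ d of the derived query, where the input clause is
    r' = p(s̃) ← c ◇ q(t̃) and the current query is Q = ⟨p(ũ) | d⟩. -/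
def stepCns (r' : Clause V D Pr) (Q : Query V D Pr) : Cns V D :=
  fun v => EqArgs r'.hargs Q.args v ∧ r'.constr v ∧ Q.constr v

/-- A derivation step Q ⟹_r Q₁: there is a variant r' of r variable-disjoint from Q
    (the input clause) such that the constraint s̃ = ũ ∧ c ∧ d is satisfiable, and
    Q₁ = ⟨q(t̃) | s̃ = ũ ∧ c ∧ d⟩. -/
def Step (r : Clause V D Pr) (Q Q₁ : Query V D Pr) : Prop :=
  ∃ γ : V ≃ V, ∃ S S' : Set V,
    Q.suppBy S ∧ (r.rename γ).suppBy S' ∧ Disjoint S S' ∧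
    Q.pred = r.hpred ∧
    (∃ v, stepCns (r.rename γ) Q v) ∧
    Q₁ = ⟨(r.rename γ).bpred, (r.rename γ).bargs, stepCns (r.rename γ) Q⟩

/-- Q₀ loops w.r.t. the program `Prog`: there is an infinite derivation of Prog ∪ {Q₀}. -/
def Loops (Prog : Set (Clause V D Pr)) (Q₀ : Query V D Pr) : Prop :=
  ∃ Qs : ℕ → Query V D Pr, Qs 0 = Q₀ ∧ ∀ n, ∃ r ∈ Prog, Step r (Qs n) (Qs (n + 1))

/-- Projection of a sequence onto a set of (0-based) positions, in increasing order. -/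
def projArgs {α : Type} (s : Finset ℕ) (l : List α) : List α :=
  ((s.filter (· < l.length)).sort (· ≤ ·)).filterMap (fun i => l[i]?)

/-- Projection of a query on a set of positions τ. -/
def Query.proj (τ : Pr → Finset ℕ) (Q : Query V D Pr) : Query V D Pr :=
  ⟨Q.pred, projArgs (τ Q.pred) Q.args, Q.constr⟩

/-- Projection of a query on the complementary set of positions τ̄. -/
def Query.coproj (τ : Pr → Finset ℕ) (Q : Query V D Pr) : Query V D Pr :=
  ⟨Q.pred, projArgs (Finset.range Q.args.length \ τ Q.pred) Q.args, Q.constr⟩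

/-- A filter Δ = (τ, δ): a set of positions together with, for each predicate,
    a query over the projected predicate whose constraint is satisfiable. -/
structure PFilter (V D Pr : Type) where
  pos : Pr → Finset ℕ
  delta : Pr → Query V D Pr
  delta_pred : ∀ p, (delta p).pred = p
  delta_sat : ∀ p, ∃ v, (delta p).constr v

/-- Q satisfies Δ when Set(Q|_τ) ⊆ Set(δ(rel(Q))). -/
def PFilter.Satisfies (Δ : PFilter V D Pr) (Q : Query V D Pr) : Prop :=
  (Q.proj Δ.pos).descSet ⊆ (Δ.delta Q.pred).descSet

/-- Q' is Δ-more general than Q. -/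
def PFilter.MoreGen (Δ : PFilter V D Pr) (Q' Q : Query V D Pr) : Prop :=
  (Q.coproj Δ.pos).descSet ⊆ (Q'.coproj Δ.pos).descSet ∧ Δ.Satisfies Q'

/-- Δ is derivation neutral (DN) for the clause r. -/
def PFilter.DN (Δ : PFilter V D Pr) (r : Clause V D Pr) : Prop :=
  ∀ Q Q₁ : Query V D Pr, Q.finSupp → Step r Q Q₁ →
    Δ.Satisfies Q₁ ∧
    ∀ Q' : Query V D Pr, Q'.finSupp → Δ.MoreGen Q' Q →
      ∃ Q₁', Step r Q' Q₁' ∧ Δ.MoreGen Q₁' Q₁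

/-- sat(ũ, Q): taking a fresh variant of Q and existentially quantifying its variables,
    the values of ũ can be matched with the arguments of Q while its constraint holds. -/
def satC (us : List (Trm V D)) (Q : Query V D Pr) : Cns V D :=
  fun v => ∃ w : V → D, us.length = Q.args.length ∧
    (∀ pr ∈ us.zip Q.args, pr.1 v = pr.2 w) ∧ Q.constr w

/-- First DNlog condition: D ⊨ c → ∀_{X̃|τ(p)} [sat(X̃|τ(p), δ(p)) → ∃_𝒴 c],
    with 𝒴 = Ỹ|τ(q) ∪ local_vars(r). -/
def DNlog1 (Δ : PFilter V D Pr) (p q : Pr) (Xs Ys : List V) (L : Set V) (c : Cns V D) : Prop :=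
  ∀ v : V → D, c v →
    ∀ v' : V → D, (∀ x : V, x ∉ projArgs (Δ.pos p) Xs → v' x = v x) →
      satC ((projArgs (Δ.pos p) Xs).map varT) (Δ.delta p) v' →
      ∃ w : V → D, (∀ x : V, x ∉ projArgs (Δ.pos q) Ys → x ∉ L → w x = v' x) ∧ c w

/-- Second DNlog condition: D ⊨ c → sat(Ỹ|τ(q), δ(q)). -/
def DNlog2 (Δ : PFilter V D Pr) (q : Pr) (Ys : List V) (c : Cns V D) : Prop :=
  ∀ v : V → D, c v → satC ((projArgs (Δ.pos q) Ys).map varT) (Δ.delta q) v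

/-- Δ is DNlog for the clause p(X̃) ← c ◇ q(Ỹ) with local variables L. -/
def DNlog (Δ : PFilter V D Pr) (p q : Pr) (Xs Ys : List V) (L : Set V) (c : Cns V D) : Prop :=
  DNlog1 Δ p q Xs Ys L c ∧ DNlog2 Δ q Ys c

end CLP
theorem sat_characterizes_membership {V D Pr : Type} (Q : CLP.Query V D Pr) (γ : V ≃ V)
    (us : List (CLP.Trm V D)) (S S' : Set V)
    (hus : ∀ t ∈ us, CLP.Trm.supp t S) (hQ' : (Q.rename γ).suppBy S')
    (hdisj : Disjoint S S') (hlen : us.length = Q.args.length) (v : V → D) :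
    (CLP.Atom.mk Q.pred (us.map (fun t => t v)) ∈ Q.descSet) ↔
      ∃ w : V → D, (∀ x ∉ S', w x = v x) ∧
        CLP.EqArgs us (Q.rename γ).args w ∧ (Q.rename γ).constr w := by
  classical
  obtain ⟨hsuppT, hsuppC⟩ := hQ'
  have hdisj' : ∀ x ∈ S, x ∉ S' := fun x hx => Set.disjoint_left.mp hdisj hx
  have hrlen : (Q.rename γ).args.length = Q.args.length := by
    simp [CLP.Query.rename]
  constructor
  · rintro ⟨w', hc, heq⟩
    obtain ⟨-, hmap⟩ := CLP.Atom.mk.injEq _ _ _ _ ▸ heq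
    set w0 : V → D := fun x => if x ∈ S' then w' (γ.symm x) else v x with hw0
    have hagree : ∀ x ∈ S', w0 x = (w' ∘ γ.symm) x := by
      intro x hx; simp [hw0, hx]
    refine ⟨w0, ?_, ⟨hlen.trans hrlen.symm, ?_⟩, ?_⟩
    · intro x hx; simp [hw0, hx]
    · intro pr hpr
      obtain ⟨i, hi, rfl⟩ := List.mem_iff_getElem.mp hpr
      rw [List.getElem_zip]
      have hi1 : i < us.length := lt_of_lt_of_le hi (by simp [List.length_zip])
      have hi2 : i < (Q.rename γ).args.length := lt_of_lt_of_le hi (by simp [List.length_zip])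
      have hi3 : i < Q.args.length := hrlen ▸ hi2
      have h1 : us[i] w0 = us[i] v := by
        refine hus _ (List.getElem_mem hi1) w0 v ?_
        intro x hx; simp [hw0, hdisj' x hx]
      have h2 : (Q.rename γ).args[i] w0 = (Q.rename γ).args[i] (w' ∘ γ.symm) :=
        hsuppT _ (List.getElem_mem hi2) w0 (w' ∘ γ.symm) hagree
      have h3 : (Q.rename γ).args[i] (w' ∘ γ.symm) = Q.args[i] w' := by
        have he : ((w' ∘ γ.symm) ∘ γ) = w' := by funext x; simp
        unfold CLP.Query.rename
        erw [List.getElem_map]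
        simp [he]
      have h4 : us[i] v = Q.args[i] w' := by
        have := congrArg (fun l => l[i]?) hmap
        simpa [List.getElem?_eq_getElem, hi1, hi3] using this
      simp only [h1, h2, h3, h4]
    · show Q.constr (w0 ∘ γ)
      have : (Q.rename γ).constr w0 ↔ (Q.rename γ).constr (w' ∘ γ.symm) :=
        hsuppC w0 (w' ∘ γ.symm) hagree
      have h5 : (Q.rename γ).constr (w' ∘ γ.symm) := by
        show Q.constr ((w' ∘ γ.symm) ∘ γ)
        have : (w' ∘ γ.symm) ∘ γ = w' := by funext x; simp
        rw [this]; exact hc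
      exact this.mpr h5
  · rintro ⟨w, hout, ⟨hlen2, hpairs⟩, hcw⟩
    refine ⟨w ∘ γ, hcw, ?_⟩
    congr 1
    apply List.ext_getElem (by simp [hlen])
    intro i hi1 hi2
    simp only [List.length_map] at hi1 hi2
    have hi3 : i < (Q.rename γ).args.length := hrlen ▸ hi2
    have h1 : us[i] v = us[i] w := by
      refine hus _ (List.getElem_mem hi1) v w ?_
      intro x hx; exact (hout x (hdisj' x hx)).symm
    have h2 : us[i] w = (Q.rename γ).args[i] w := by
      refine hpairs (us[i], (Q.rename γ).args[i]) ?_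
      refine List.mem_iff_getElem.mpr ⟨i, ?_, ?_⟩
      · simp [List.length_zip, hi1, hi3]
      · rw [List.getElem_zip]
    have h3 : (Q.rename γ).args[i] w = Q.args[i] (w ∘ γ) := by
      unfold CLP.Query.rename
      erw [List.getElem_map]
    simp only [List.getElem_map, h1, h2, h3]
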